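/- Let ν be a Borel probability measure on ℝ whose support is contained in a compact interval [0, L] with L > 0, satisfying ν({0}) = 1/2 and ν((0,∞)) = 1/2, and define δ(t) = ν((0,t)) for t > 0. Then every empirical median satisfies m̂_n ≥ 0 almost surely, and for every n ≥ 1 and every t > 0, P(m̂_n ≥ t) ≤ (1 − 4δ(t)²)^{n/2}. -/

import Mathlib

open scoped Classical

open MeasureTheory Real Finset

lemma median_count {n : ℕ} (y : ℕ → ℝ) (m t : ℝ) (ht : t ≤ m)
    (hmin : ∀ β, (∑ k ∈ Finset.range n, |m - y k|) ≤ ∑ k ∈ Finset.range n, |β - y k|) :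
    n ≤ 2 * ((Finset.range n).filter (fun k => t ≤ y k)).card := by
  classical
  set A := (Finset.range n).filter (fun k => m ≤ y k) with hA
  set B := (Finset.range n).filter (fun k => ¬ m ≤ y k) with hB
  have hcard : A.card + B.card = n := by
    rw [hA, hB, Finset.card_filter_add_card_filter_not, Finset.card_range]
  have hmain : B.card ≤ A.card := by
    rcases B.eq_empty_or_nonempty with hBe | hBne
    · simp [hBe]
    · set M := B.sup' hBne y with hM
      have hMlt : M < m := by
        rw [hM, Finset.sup'_lt_iff]
        intro k hk
        have := (Finset.mem_filter.1 hk).2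
        linarith [not_le.1 this]
      set ε := m - M with hε
      have hεpos : 0 < ε := by simp [hε]; linarith
      have hle : ∀ k ∈ B, y k ≤ m - ε := by
        intro k hk
        have : y k ≤ M := Finset.le_sup' y hk
        linarith
      have hsplit : ∀ β : ℝ, ∑ k ∈ Finset.range n, |β - y k|
          = ∑ k ∈ A, |β - y k| + ∑ k ∈ B, |β - y k| := by
        intro β
        rw [hA, hB, Finset.sum_filter_add_sum_filter_not]
      have h1 : ∑ k ∈ A, |m - ε - y k| = ∑ k ∈ A, (|m - y k| + ε) := by
        apply Finset.sum_congr rfl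
        intro k hk
        have hk' : m ≤ y k := (Finset.mem_filter.1 hk).2
        rw [abs_of_nonpos (by linarith), abs_of_nonpos (by linarith)]
        ring
      have h2 : ∑ k ∈ B, |m - ε - y k| = ∑ k ∈ B, (|m - y k| - ε) := by
        apply Finset.sum_congr rfl
        intro k hk
        have hk' : y k ≤ m - ε := hle k hk
        have hk'' : ¬ m ≤ y k := (Finset.mem_filter.1 hk).2
        rw [abs_of_nonneg (by linarith), abs_of_nonneg (by linarith [not_le.1 hk''])]
        ring
      have key := hmin (m - ε)
      rw [hsplit (m - ε), hsplit m, h1, h2] at key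
      simp only [Finset.sum_add_distrib, Finset.sum_sub_distrib, Finset.sum_const,
        nsmul_eq_mul] at key
      have : (B.card : ℝ) * ε ≤ (A.card : ℝ) * ε := by simp only [hε]; linarith
      exact_mod_cast le_of_mul_le_mul_right this hεpos
  have hsub : A ⊆ (Finset.range n).filter (fun k => t ≤ y k) := by
    intro k hk
    rw [Finset.mem_filter] at hk ⊢
    exact ⟨hk.1, le_trans ht hk.2⟩
  calc n = A.card + B.card := hcard.symm
    _ ≤ 2 * A.card := by omega
    _ ≤ 2 * ((Finset.range n).filter (fun k => t ≤ y k)).card :=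
        Nat.mul_le_mul_left 2 (Finset.card_le_card hsub)

lemma exp_ind_eq {Ω : Type*} (E : Set Ω) (s : ℝ) :
    (fun ω => Real.exp (s * (if ω ∈ E then (1:ℝ) else 0)))
      = fun ω => E.indicator (fun _ => Real.exp s - 1) ω + 1 := by
  funext ω
  by_cases h : ω ∈ E <;> simp [h, Set.indicator]

lemma integrable_exp_ind {Ω : Type*} [MeasurableSpace Ω] (P : Measure Ω) [IsProbabilityMeasure P]
    {E : Set Ω} (hE : MeasurableSet E) (s : ℝ) :
    Integrable (fun ω => Real.exp (s * (if ω ∈ E then (1:ℝ) else 0))) P := by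
  rw [exp_ind_eq]
  exact ((integrable_const (Real.exp s - 1)).indicator hE).add (integrable_const 1)

lemma mgf_ind {Ω : Type*} [MeasurableSpace Ω] (P : Measure Ω) [IsProbabilityMeasure P]
    {E : Set Ω} (hE : MeasurableSet E) (s : ℝ) :
    ProbabilityTheory.mgf (fun ω => if ω ∈ E then (1:ℝ) else 0) P s
      = (1 - (P E).toReal) + (P E).toReal * Real.exp s := by
  rw [ProbabilityTheory.mgf, exp_ind_eq]
  rw [integral_add ((integrable_const (Real.exp s - 1)).indicator hE) (integrable_const 1),
    integral_indicator_const _ hE, integral_const]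
  simp [smul_eq_mul]
  rw [measureReal_def]
  ring

/-- One-sided concentration of the empirical median on the line: if `ν({0}) = 1/2`,
`ν((0,∞)) = 1/2` and the support of `ν` is contained in `[0,L]`, then every
empirical median is nonnegative almost surely, and for every `n ≥ 1` and `t > 0`,
`P(m̂_n ≥ t) ≤ (1 − 4δ(t)²)^{n/2}` where `δ(t) = ν((0,t))`. -/
theorem stmt_17 (ν : Measure ℝ) [IsProbabilityMeasure ν]
    (L : ℝ) (hL : 0 < L) (hsupp : ν (Set.Icc 0 L) = 1)
    (hatom : ν {(0 : ℝ)} = 1 / 2) (hright : ν (Set.Ioi 0) = 1 / 2)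
    {Ω : Type*} [MeasurableSpace Ω] (P : Measure Ω) [IsProbabilityMeasure P]
    (Y : ℕ → Ω → ℝ)
    (hY_meas : ∀ k, Measurable (Y k))
    (hY_dist : ∀ k, P.map (Y k) = ν)
    (hY_indep : ProbabilityTheory.iIndepFun Y P)
    (mhat : ℕ → Ω → ℝ)
    (hmhat_meas : ∀ n, Measurable (mhat n))
    (hmhat_med : ∀ n, 1 ≤ n → ∀ ω β,
      (∑ k ∈ Finset.range n, |mhat n ω - Y k ω|) ≤ ∑ k ∈ Finset.range n, |β - Y k ω|) :
    ∀ n : ℕ, 1 ≤ n →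
      (∀ᵐ ω ∂P, 0 ≤ mhat n ω) ∧
      (∀ t : ℝ, 0 < t →
        (P {ω | t ≤ mhat n ω}).toReal ≤
          (1 - 4 * (ν (Set.Ioo 0 t)).toReal ^ 2) ^ ((n : ℝ) / 2)) := by
  intro n hn
  have hn1 : (1:ℝ) ≤ (n:ℝ) := by exact_mod_cast hn
  constructor
  · -- nonnegativity
    have hIio : ν (Set.Iio 0) = 0 := by
      have hc : ν (Set.Icc 0 L)ᶜ = 0 := by
        rw [measure_compl measurableSet_Icc (measure_ne_top ν _), hsupp, measure_univ,
          tsub_self]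
      refine measure_mono_null ?_ hc
      intro x hx
      simp only [Set.mem_Iio] at hx
      simp only [Set.mem_compl_iff, Set.mem_Icc, not_and_or, not_le]
      left; exact hx
    have hY0 : ∀ k : ℕ, ∀ᵐ ω ∂P, 0 ≤ Y k ω := by
      intro k
      have h0 : P (Y k ⁻¹' Set.Iio 0) = 0 := by
        rw [← Measure.map_apply (hY_meas k) measurableSet_Iio, hY_dist k, hIio]
      rw [ae_iff]
      convert h0 using 2
      ext ω
      simp [not_le]
    have hall : ∀ᵐ ω ∂P, ∀ k : ℕ, 0 ≤ Y k ω := ae_all_iff.2 hY0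
    filter_upwards [hall] with ω hω
    by_contra hneg
    push_neg at hneg
    have key := hmhat_med n hn ω 0
    have hs2 : ∑ k ∈ Finset.range n, |(0:ℝ) - Y k ω| = ∑ k ∈ Finset.range n, Y k ω := by
      apply Finset.sum_congr rfl
      intro k _
      rw [zero_sub, abs_neg, abs_of_nonneg (hω k)]
    have hs1 : ∑ k ∈ Finset.range n, (Y k ω - mhat n ω)
        ≤ ∑ k ∈ Finset.range n, |mhat n ω - Y k ω| := by
      apply Finset.sum_le_sum
      intro k _
      rw [abs_sub_comm]
      exact le_abs_self _
    have hfin := hs1.trans (key.trans_eq hs2)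
    rw [Finset.sum_sub_distrib, Finset.sum_const, Finset.card_range, nsmul_eq_mul] at hfin
    nlinarith
  · -- tail bound
    intro t ht
    set p := (ν (Set.Ici t)).toReal with hpdef
    set δ := (ν (Set.Ioo 0 t)).toReal with hδdef
    have hδ0 : 0 ≤ δ := ENNReal.toReal_nonneg
    have hp0 : 0 ≤ p := ENNReal.toReal_nonneg
    have hsum : δ + p = 1/2 := by
      have hdisj : Disjoint (Set.Ioo 0 t) (Set.Ici t) := by
        apply Set.disjoint_left.2
        intro x hx hx'
        exact absurd hx.2 (not_lt.2 hx')
      have hunion : Set.Ioo 0 t ∪ Set.Ici t = Set.Ioi 0 := by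
        ext x
        simp only [Set.mem_union, Set.mem_Ioo, Set.mem_Ici, Set.mem_Ioi]
        constructor
        · rintro (⟨h1, _⟩ | h1)
          · exact h1
          · linarith
        · intro h1
          rcases lt_or_ge x t with h2 | h2
          · exact Or.inl ⟨h1, h2⟩
          · exact Or.inr h2
      have hm : ν (Set.Ioo 0 t) + ν (Set.Ici t) = 1/2 := by
        rw [← measure_union hdisj measurableSet_Ici, hunion, hright]
      have := congrArg ENNReal.toReal hm
      rw [ENNReal.toReal_add (measure_ne_top ν _) (measure_ne_top ν _)] at this
      rw [hδdef, hpdef, this]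
      simp [ENNReal.toReal_div]
    -- key inclusion
    set X : ℕ → Ω → ℝ := fun k ω => if t ≤ Y k ω then 1 else 0 with hX
    have hSX : ∀ ω, (∑ k ∈ Finset.range n, X k) ω
        = (((Finset.range n).filter (fun k => t ≤ Y k ω)).card : ℝ) := by
      intro ω
      rw [Finset.sum_apply]
      simp only [hX]
      rw [Finset.sum_boole]
    have hincl : {ω | t ≤ mhat n ω} ⊆ {ω | (n:ℝ)/2 ≤ (∑ k ∈ Finset.range n, X k) ω} := by
      intro ω hω
      have hc := median_count (fun k => Y k ω) (mhat n ω) t hω (hmhat_med n hn ω)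
      have hc' : (n:ℝ) ≤ 2 * (((Finset.range n).filter (fun k => t ≤ Y k ω)).card : ℝ) := by
        exact_mod_cast hc
      rw [Set.mem_setOf_eq, hSX]
      linarith
    have hmono : (P {ω | t ≤ mhat n ω}).toReal
        ≤ (P {ω | (n:ℝ)/2 ≤ (∑ k ∈ Finset.range n, X k) ω}).toReal :=
      ENNReal.toReal_mono (measure_ne_top _ _) (measure_mono hincl)
    have hPE : ∀ k : ℕ, P (Y k ⁻¹' Set.Ici t) = ν (Set.Ici t) := by
      intro k
      rw [← Measure.map_apply (hY_meas k) measurableSet_Ici, hY_dist k]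
    rcases eq_or_lt_of_le hp0 with hp | hppos
    · -- p = 0
      have hν0 : ν (Set.Ici t) = 0 := by
        have := hp.symm
        rw [hpdef] at this
        exact (ENNReal.toReal_eq_zero_iff _).1 this |>.resolve_right (measure_ne_top ν _)
      have hδhalf : δ = 1/2 := by linarith
      have hzero : P {ω | t ≤ mhat n ω} = 0 := by
        refine measure_mono_null ?_ (measure_iUnion_null (s := fun k => Y k ⁻¹' Set.Ici t) ?_)
        · intro ω hω
          have hc := median_count (fun k => Y k ω) (mhat n ω) t hω (hmhat_med n hn ω)
          have hpos : 0 < ((Finset.range n).filter (fun k => t ≤ (fun k => Y k ω) k)).card := by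
            beta_reduce
            omega
          obtain ⟨k, hk⟩ := Finset.card_pos.1 hpos
          rw [Finset.mem_filter] at hk
          exact Set.mem_iUnion.2 ⟨k, hk.2⟩
        · intro k
          rw [hPE k, hν0]
      have hrhs : (1 : ℝ) - 4 * δ^2 = 0 := by rw [hδhalf]; norm_num
      have hne : ((n:ℝ)/2) ≠ 0 := ne_of_gt (by linarith)
      rw [hzero, hrhs, Real.zero_rpow hne]
      simp
    · -- p > 0
      set q := 1 - p with hqdef
      have hpδ : p = 1/2 - δ := by linarith
      have hq : q = 1/2 + δ := by rw [hqdef]; linarith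
      have hqpos : 0 < q := by rw [hq]; linarith
      have hpq : p ≤ q := by rw [hpδ, hq]; linarith
      set s := Real.log (q / p) with hsdef
      have hs0 : 0 ≤ s := Real.log_nonneg ((one_le_div hppos).2 hpq)
      have hexp : Real.exp s = q / p := Real.exp_log (div_pos hqpos hppos)
      have hg : Measurable (fun x : ℝ => if t ≤ x then (1:ℝ) else 0) :=
        Measurable.ite measurableSet_Ici measurable_const measurable_const
      have hXmeas : ∀ k, Measurable (X k) := fun k => hg.comp (hY_meas k)
      have hXindep : ProbabilityTheory.iIndepFun X P :=
        hY_indep.comp (fun _ => fun x : ℝ => if t ≤ x then (1:ℝ) else 0) (fun _ => hg)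
      have hXE : ∀ k, X k = fun ω => if ω ∈ Y k ⁻¹' Set.Ici t then (1:ℝ) else 0 := fun k => rfl
      have hint : ∀ k ∈ Finset.range n,
          Integrable (fun ω => Real.exp (s * X k ω)) P := by
        intro k _
        rw [hXE k]
        exact integrable_exp_ind P ((hY_meas k) measurableSet_Ici) s
      have hmgfk : ∀ k, ProbabilityTheory.mgf (X k) P s = q + p * Real.exp s := by
        intro k
        rw [hXE k, mgf_ind P ((hY_meas k) measurableSet_Ici) s, hPE k, ← hpdef, ← hqdef]
      have hSint := hXindep.integrable_exp_mul_sum hXmeas hint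
      have chern := ProbabilityTheory.measure_ge_le_exp_mul_mgf ((n:ℝ)/2) hs0 hSint
      rw [hXindep.mgf_sum hXmeas] at chern
      have hprod : ∏ k ∈ Finset.range n, ProbabilityTheory.mgf (X k) P s = (2*q)^n := by
        rw [Finset.prod_congr rfl (fun k _ => hmgfk k), Finset.prod_const, Finset.card_range]
        congr 1
        rw [hexp]
        field_simp
        ring
      rw [hprod] at chern
      have hrw : Real.exp (-s * ((n:ℝ)/2)) * (2*q)^n = (1 - 4*δ^2) ^ ((n:ℝ)/2) := by
        have h4 : 1 - 4*δ^2 = 4*(p*q) := by rw [hpδ, hq]; ring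
        have hqp : (0:ℝ) < q / p := div_pos hqpos hppos
        have e1 : Real.exp (-s * ((n:ℝ)/2)) = (q/p) ^ (-((n:ℝ)/2)) := by
          rw [Real.rpow_def_of_pos hqp, ← hsdef]
          ring_nf
        have h2q : (0:ℝ) ≤ 2*q := by linarith
        have e2 : ((2*q):ℝ)^n = ((2*q)^2 : ℝ) ^ ((n:ℝ)/2) := by
          calc ((2*q):ℝ)^n = (2*q) ^ ((n:ℝ)) := (Real.rpow_natCast _ n).symm
            _ = (2*q) ^ ((2:ℝ) * ((n:ℝ)/2)) := by congr 1; ring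
            _ = ((2*q) ^ (2:ℝ)) ^ ((n:ℝ)/2) := Real.rpow_mul h2q 2 _
            _ = ((2*q)^2 : ℝ) ^ ((n:ℝ)/2) := by rw [Real.rpow_two]
        have e1' : (q/p) ^ (-((n:ℝ)/2)) = (p/q) ^ ((n:ℝ)/2) := by
          rw [Real.rpow_neg hqp.le, ← Real.inv_rpow hqp.le, inv_div]
        have hpq0 : (0:ℝ) ≤ p/q := le_of_lt (div_pos hppos hqpos)
        calc Real.exp (-s * ((n:ℝ)/2)) * (2*q)^n
            = (p/q) ^ ((n:ℝ)/2) * ((2*q)^2 : ℝ) ^ ((n:ℝ)/2) := by rw [e1, e1', e2]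
          _ = ((p/q) * (2*q)^2) ^ ((n:ℝ)/2) := (Real.mul_rpow hpq0 (by positivity)).symm
          _ = (4*(p*q)) ^ ((n:ℝ)/2) := by
              congr 1
              field_simp
              ring
          _ = (1 - 4*δ^2) ^ ((n:ℝ)/2) := by rw [h4]
      exact hmono.trans (chern.trans_eq hrw)
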